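/- Let x ∈ ℝ^m and X ∈ S^m be such that the (m+1)×(m+1) block matrix [[1, x^T],[x, X]] is positive semidefinite, diag(X) = x, tr(X) = n, and ⟨J_m, X⟩ = n² (J_m the all-ones m×m matrix). If ⟨u_i u_i^T, X⟩ = ⟨v_i v_i^T, X⟩ = 1 for all i ∈ N, then ⟨u_i u_j^T, X⟩ = 1 and ⟨v_i v_j^T, X⟩ = 1 for all i, j ∈ N with i ≠ j, and ⟨u_i v_j^T, X⟩ = 1 for all i, j ∈ N. -/

import Mathlib

open Matrix

noncomputable section

/-- Trace inner product `⟨M, N⟩ = tr(Mᵀ N)` on real matrices. -/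
def tip {k l : ℕ} (M N : Matrix (Fin k) (Fin l) ℝ) : ℝ := (Mᵀ * N).trace

/-- The extended matrix `[[1, xᵀ], [x, X]]`, with the top row/column indexed by `0`. -/
def extM {m : ℕ} (x : Fin m → ℝ) (X : Matrix (Fin m) (Fin m) ℝ) :
    Matrix (Fin (m + 1)) (Fin (m + 1)) ℝ :=
  Matrix.of (Fin.cons (Fin.cons 1 x) (fun i => Fin.cons (x i) (fun j => X i j)))

lemma tip_vecMulVec {m : ℕ} (a b : Fin m → ℝ) (X : Matrix (Fin m) (Fin m) ℝ) :
    tip (vecMulVec a b) X = a ⬝ᵥ (X *ᵥ b) := by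
  simp [tip, trace, Matrix.mul_apply, vecMulVec, dotProduct, mulVec, diag, Finset.mul_sum,
    Finset.sum_mul]
  rw [Finset.sum_comm]
  congr 1; ext i; congr 1; ext j; ring

lemma extM_quad {m : ℕ} {x : Fin m → ℝ} {X : Matrix (Fin m) (Fin m) ℝ}
    (hpsd : (extM x X).PosSemidef) (w : Fin m → ℝ) :
    0 ≤ w ⬝ᵥ (X *ᵥ w) - (x ⬝ᵥ w) ^ 2 := by
  have h := hpsd.dotProduct_mulVec_nonneg (Fin.cons (-(x ⬝ᵥ w)) w)
  have h0 : (extM x X) *ᵥ (Fin.cons (-(x ⬝ᵥ w)) w)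
      = Fin.cons 0 (fun k => x k * (-(x ⬝ᵥ w)) + (X *ᵥ w) k) := by
    funext i
    refine Fin.cases ?_ (fun k => ?_) i
    · simp [extM, mulVec, dotProduct, Fin.sum_univ_succ]
    · simp [extM, mulVec, dotProduct, Fin.sum_univ_succ]
  rw [h0] at h
  have h1 : star (Fin.cons (-(x ⬝ᵥ w)) w) ⬝ᵥ Fin.cons (0:ℝ) (fun k => x k * (-(x ⬝ᵥ w)) + (X *ᵥ w) k)
      = w ⬝ᵥ (X *ᵥ w) - (x ⬝ᵥ w) ^ 2 := by
    simp [dotProduct, Fin.sum_univ_succ, Finset.sum_add_distrib, ← Finset.sum_mul, mul_add]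
    have hcomm : ∑ e, w e * (x e * (∑ i, x i * w i)) = (∑ i, x i * w i) * ∑ e, x e * w e := by
      rw [Finset.mul_sum]
      exact Finset.sum_congr rfl fun e _ => by ring
    rw [hcomm]
    ring
  rw [h1] at h
  exact h

lemma vmv_mulVec {m : ℕ} (x b : Fin m → ℝ) : vecMulVec x x *ᵥ b = (x ⬝ᵥ b) • x := by
  funext e
  simp [vecMulVec, mulVec, dotProduct, Finset.sum_mul, Finset.mul_sum]
  exact Finset.sum_congr rfl fun f _ => by ring

lemma Ypsd {m : ℕ} {x : Fin m → ℝ} {X : Matrix (Fin m) (Fin m) ℝ}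
    (hXsymm : X.IsSymm) (hpsd : (extM x X).PosSemidef) :
    (X - vecMulVec x x).PosSemidef := by
  rw [posSemidef_iff_dotProduct_mulVec]
  constructor
  · rw [IsHermitian, conjTranspose_eq_transpose_of_trivial, transpose_sub, hXsymm]
    congr 1
    ext i j
    simp [vecMulVec, mul_comm]
  · intro z
    have h := extM_quad hpsd z
    have hz : star z = z := by funext e; simp
    rw [hz, sub_mulVec, dotProduct_sub, vmv_mulVec, dotProduct_smul]
    have : z ⬝ᵥ x = x ⬝ᵥ z := dotProduct_comm _ _
    simp only [smul_eq_mul, this]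
    nlinarith [h]

/-- Key lemma: a family summing to the all-ones vector, each with unit quadratic form. -/
lemma key_lemma {n m : ℕ} {x : Fin m → ℝ} {X : Matrix (Fin m) (Fin m) ℝ}
    (hXsymm : X.IsSymm) (hpsd : (extM x X).PosSemidef)
    (htr : ∑ e, x e = (n : ℝ))
    (w : Fin n → Fin m → ℝ) (hw1 : ∀ e, ∑ i, w i e = 1)
    (hI : ∀ i, w i ⬝ᵥ (X *ᵥ w i) = 1) :
    ∀ i, x ⬝ᵥ w i = 1 ∧ (X - vecMulVec x x) *ᵥ w i = 0 := by
  have hple : ∀ i, x ⬝ᵥ w i ≤ 1 := by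
    intro i
    have h := extM_quad hpsd (w i)
    rw [hI i] at h
    nlinarith [h]
  have hsum : ∑ i, x ⬝ᵥ w i = (n : ℝ) := by
    rw [← htr]
    simp only [dotProduct]
    rw [Finset.sum_comm]
    refine Finset.sum_congr rfl fun e _ => ?_
    rw [← Finset.mul_sum, hw1 e, mul_one]
  have hp1 : ∀ i, x ⬝ᵥ w i = 1 := by
    have hzero : ∑ i, (1 - x ⬝ᵥ w i) = 0 := by
      rw [Finset.sum_sub_distrib, hsum]
      simp
    have := (Finset.sum_eq_zero_iff_of_nonneg
      (fun i _ => by linarith [hple i])).mp hzero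
    intro i
    have := this i (Finset.mem_univ i)
    linarith
  intro i
  refine ⟨hp1 i, ?_⟩
  have hY := Ypsd hXsymm hpsd
  rw [← (hY.dotProduct_mulVec_zero_iff (w i))]
  have hz : star (w i) = w i := by funext e; simp
  rw [hz, sub_mulVec, dotProduct_sub, vmv_mulVec, dotProduct_smul, hI i]
  rw [dotProduct_comm (w i) x, hp1 i]
  simp

/-- if the extended matrix `[[1,xᵀ],[x,X]]` is PSD, `diag(X) = x`,
`tr(X) = n`, `⟨J, X⟩ = n²` and the Type I squared linear constraints hold, then the
Type II and Type III squared linear constraints hold as well. -/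
theorem typeII_typeIII_redundant
    (n m : ℕ) (src tgt : Fin m → Fin n)
    (h_simple : ∀ e f : Fin m, src e = src f → tgt e = tgt f → e = f)
    (h_noloop : ∀ e : Fin m, src e ≠ tgt e)
    (u v : Fin n → Fin m → ℝ)
    (hu : ∀ i e, u i e = if src e = i then 1 else 0)
    (hv : ∀ i e, v i e = if tgt e = i then 1 else 0)
    (x : Fin m → ℝ) (X : Matrix (Fin m) (Fin m) ℝ)
    (hXsymm : X.IsSymm)
    (hpsd : (extM x X).PosSemidef)
    (hdiag : X.diag = x)
    (htrace : X.trace = (n : ℝ))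
    (hallones : tip (Matrix.of fun _ _ => (1 : ℝ)) X = (n : ℝ) ^ 2)
    (hTypeI : ∀ i, tip (vecMulVec (u i) (u i)) X = 1 ∧ tip (vecMulVec (v i) (v i)) X = 1) :
    (∀ i j : Fin n, i ≠ j →
        tip (vecMulVec (u i) (u j)) X = 1 ∧ tip (vecMulVec (v i) (v j)) X = 1) ∧
      (∀ i j : Fin n, tip (vecMulVec (u i) (v j)) X = 1) := by
  have htr : ∑ e, x e = (n : ℝ) := by
    rw [← htrace]
    simp [Matrix.trace, ← hdiag, Matrix.diag]
  have hu1 : ∀ e, ∑ i, u i e = 1 := by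
    intro e
    simp only [hu]
    rw [Finset.sum_ite_eq (Finset.univ) (src e) (fun _ => (1:ℝ))]
    simp
  have hv1 : ∀ e, ∑ i, v i e = 1 := by
    intro e
    simp only [hv]
    rw [Finset.sum_ite_eq (Finset.univ) (tgt e) (fun _ => (1:ℝ))]
    simp
  have hIu : ∀ i, u i ⬝ᵥ (X *ᵥ u i) = 1 := fun i => by
    rw [← tip_vecMulVec]; exact (hTypeI i).1
  have hIv : ∀ i, v i ⬝ᵥ (X *ᵥ v i) = 1 := fun i => by
    rw [← tip_vecMulVec]; exact (hTypeI i).2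
  have hku := key_lemma hXsymm hpsd htr u hu1 hIu
  have hkv := key_lemma hXsymm hpsd htr v hv1 hIv
  have main : ∀ (a b : Fin m → ℝ), x ⬝ᵥ a = 1 → x ⬝ᵥ b = 1 →
      (X - vecMulVec x x) *ᵥ b = 0 → a ⬝ᵥ (X *ᵥ b) = 1 := by
    intro a b ha hb hY
    have : X *ᵥ b = (x ⬝ᵥ b) • x := by
      have := sub_mulVec X (vecMulVec x x) b
      rw [hY] at this
      have h2 : X *ᵥ b - vecMulVec x x *ᵥ b = 0 := this.symm
      rw [sub_eq_zero] at h2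
      rw [h2, vmv_mulVec]
    rw [this, dotProduct_smul, hb, one_smul, dotProduct_comm, ha]
  constructor
  · intro i j _
    exact ⟨by rw [tip_vecMulVec]; exact main _ _ (hku i).1 (hku j).1 (hku j).2,
      by rw [tip_vecMulVec]; exact main _ _ (hkv i).1 (hkv j).1 (hkv j).2⟩
  · intro i j
    rw [tip_vecMulVec]; exact main _ _ (hku i).1 (hkv j).1 (hkv j).2
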